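/- Let M = {A_1,…,A_m} be a family of linear operators sharing an invariant closed convex pointed cone K ⊂ R^d with nonempty interior. If there is an antinorm f on K and a constant λ ≥ 0 with f(A_i x) ≥ λ f(x) for all x ∈ K and all i, then the lower spectral radius satisfies ρ̌(M) ≥ λ. -/

import Mathlib

open Filter Topology

/-- The product of length `k` of operators from the family `A`. -/
noncomputable def prodCLM {E : Type*} [NormedAddCommGroup E] [NormedSpace ℝ E] {m : ℕ}
    (A : Fin m → E →L[ℝ] E) (k : ℕ) (w : Fin k → Fin m) : E →L[ℝ] E :=
  (List.ofFn fun i => A (w i)).prod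

theorem prodCLM_succ {E : Type*} [NormedAddCommGroup E] [NormedSpace ℝ E] {m : ℕ}
    (A : Fin m → E →L[ℝ] E) (k : ℕ) (w : Fin (k+1) → Fin m) :
    prodCLM A (k+1) w = A (w 0) * prodCLM A k (w ∘ Fin.succ) := by
  simp only [prodCLM, List.ofFn_succ, List.prod_cons]
  rfl

/-- if the operators of `M = {A_1,…,A_m}` share an invariant closed convex
pointed cone `K` with nonempty interior, and there are an antinorm `f` on `K` and
`λ ≥ 0` with `f (A_i x) ≥ λ f x` on `K`, then the lower spectral radius satisfies
`ρ̌(M) ≥ λ`. -/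
theorem antinorm_lower_bound_for_lsr
    {d m : ℕ} (hm : 0 < m)
    (A : Fin m → (EuclideanSpace ℝ (Fin d) →L[ℝ] EuclideanSpace ℝ (Fin d)))
    (K : Set (EuclideanSpace ℝ (Fin d)))
    (hK_closed : IsClosed K) (hK_conv : Convex ℝ K)
    (hK_cone : ∀ x ∈ K, ∀ t : ℝ, 0 ≤ t → t • x ∈ K)
    (hK_pointed : ∀ x ∈ K, -x ∈ K → x = 0)
    (hK_int : (interior K).Nonempty)
    (hK_inv : ∀ i : Fin m, ∀ x ∈ K, A i x ∈ K)
    (f : EuclideanSpace ℝ (Fin d) → ℝ)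
    (hf_cont : ContinuousOn f K)
    (hf_nonneg : ∀ x ∈ K, 0 ≤ f x)
    (hf_ne : ∃ x ∈ K, f x ≠ 0)
    (hf_conc : ConcaveOn ℝ K f)
    (hf_hom : ∀ x ∈ K, ∀ t : ℝ, 0 ≤ t → f (t • x) = t * f x)
    (lam : ℝ) (hlam : 0 ≤ lam)
    (hext : ∀ i : Fin m, ∀ x ∈ K, lam * f x ≤ f (A i x))
    (ρcheck : ℝ)
    (hlsr : Tendsto (fun k : ℕ => (⨅ w : Fin k → Fin m, ‖prodCLM A k w‖) ^ ((1 : ℝ) / k))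
      atTop (𝓝 ρcheck)) :
    lam ≤ ρcheck := by
  haveI : Nonempty (Fin m) := Fin.pos_iff_nonempty.mp hm
  obtain ⟨e, heK, hfe_ne⟩ := hf_ne
  have hfe : 0 < f e := lt_of_le_of_ne (hf_nonneg e heK) (Ne.symm hfe_ne)
  -- f 0 = 0, so e ≠ 0
  have hf0 : f 0 = 0 := by
    have := hf_hom e heK 0 le_rfl
    simpa using this
  have he0 : e ≠ 0 := by
    rintro rfl; rw [hf0] at hfe; exact lt_irrefl 0 hfe
  have hene : 0 < ‖e‖ := norm_pos_iff.mpr he0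
  -- bound f ≤ C ‖·‖ on K
  have hcpt : IsCompact (K ∩ Metric.sphere 0 1) :=
    (isCompact_sphere (0 : EuclideanSpace ℝ (Fin d)) 1).inter_left hK_closed
  have hne : (K ∩ Metric.sphere 0 1).Nonempty := by
    refine ⟨‖e‖⁻¹ • e, hK_cone e heK _ (inv_nonneg.mpr hene.le), ?_⟩
    simp [norm_smul, abs_of_nonneg (inv_nonneg.mpr hene.le), inv_mul_cancel₀ hene.ne']
  obtain ⟨z, hz, hzmax'⟩ := hcpt.exists_isMaxOn hne
    (hf_cont.mono (Set.inter_subset_left))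
  have hzmax : ∀ x ∈ K ∩ Metric.sphere 0 1, f x ≤ f z := fun x hx => hzmax' hx
  set C : ℝ := f z with hC
  have hC_pos : 0 < C := by
    have hu : ‖e‖⁻¹ • e ∈ K ∩ Metric.sphere 0 1 := by
      refine ⟨hK_cone e heK _ (inv_nonneg.mpr hene.le), ?_⟩
      simp [norm_smul, abs_of_nonneg (inv_nonneg.mpr hene.le), inv_mul_cancel₀ hene.ne']
    have h1 : f (‖e‖⁻¹ • e) ≤ C := hzmax _ hu
    have h2 : f (‖e‖⁻¹ • e) = ‖e‖⁻¹ * f e := hf_hom e heK _ (inv_nonneg.mpr hene.le)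
    rw [h2] at h1
    exact lt_of_lt_of_le (by positivity) h1
  have hfC : ∀ x ∈ K, f x ≤ C * ‖x‖ := by
    intro x hx
    rcases eq_or_ne x 0 with rfl | hx0
    · simp [hf0]
    · have hnx : 0 < ‖x‖ := norm_pos_iff.mpr hx0
      have hu : ‖x‖⁻¹ • x ∈ K ∩ Metric.sphere 0 1 := by
        refine ⟨hK_cone x hx _ (inv_nonneg.mpr hnx.le), ?_⟩
        simp [norm_smul, abs_of_nonneg (inv_nonneg.mpr hnx.le), inv_mul_cancel₀ hnx.ne']
      have h1 : f (‖x‖⁻¹ • x) ≤ C := hzmax _ hu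
      have h2 : f (‖x‖⁻¹ • x) = ‖x‖⁻¹ * f x := hf_hom x hx _ (inv_nonneg.mpr hnx.le)
      rw [h2] at h1
      calc f x = ‖x‖ * (‖x‖⁻¹ * f x) := by field_simp
        _ ≤ ‖x‖ * C := by exact mul_le_mul_of_nonneg_left h1 hnx.le
        _ = C * ‖x‖ := mul_comm _ _
  -- key induction
  have key : ∀ k : ℕ, ∀ w : Fin k → Fin m,
      prodCLM A k w e ∈ K ∧ lam ^ k * f e ≤ f (prodCLM A k w e) := by
    intro k
    induction k with
    | zero => intro w; simp [prodCLM, heK]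
    | succ k ih =>
      intro w
      obtain ⟨hmem, hle⟩ := ih (w ∘ Fin.succ)
      rw [prodCLM_succ]
      have hBe := hmem
      constructor
      · exact hK_inv (w 0) _ hBe
      · calc lam ^ (k+1) * f e = lam * (lam ^ k * f e) := by ring
          _ ≤ lam * f (prodCLM A k (w ∘ Fin.succ) e) :=
              mul_le_mul_of_nonneg_left hle hlam
          _ ≤ f (A (w 0) (prodCLM A k (w ∘ Fin.succ) e)) := hext (w 0) _ hBe
          _ = f ((A (w 0) * prodCLM A k (w ∘ Fin.succ)) e) := rfl
  set c : ℝ := f e / (C * ‖e‖) with hc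
  have hc_pos : 0 < c := by positivity
  have hnorm : ∀ k : ℕ, ∀ w : Fin k → Fin m, c * lam ^ k ≤ ‖prodCLM A k w‖ := by
    intro k w
    obtain ⟨hmem, hle⟩ := key k w
    have h1 : lam ^ k * f e ≤ C * ‖prodCLM A k w e‖ := hle.trans (hfC _ hmem)
    have h2 : ‖prodCLM A k w e‖ ≤ ‖prodCLM A k w‖ * ‖e‖ := (prodCLM A k w).le_opNorm e
    have h3 : lam ^ k * f e ≤ C * (‖prodCLM A k w‖ * ‖e‖) :=
      h1.trans (mul_le_mul_of_nonneg_left h2 hC_pos.le)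
    rw [hc, div_mul_eq_mul_div, div_le_iff₀ (by positivity)]
    calc f e * lam ^ k = lam ^ k * f e := mul_comm _ _
      _ ≤ C * (‖prodCLM A k w‖ * ‖e‖) := h3
      _ = ‖prodCLM A k w‖ * (C * ‖e‖) := by ring
  -- pass to the infimum and take roots
  have hub : ∀ k : ℕ, k ≠ 0 →
      c ^ ((1:ℝ)/k) * lam ≤ (⨅ w : Fin k → Fin m, ‖prodCLM A k w‖) ^ ((1:ℝ)/k) := by
    intro k hk
    have hinf : c * lam ^ k ≤ ⨅ w : Fin k → Fin m, ‖prodCLM A k w‖ :=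
      le_ciInf (hnorm k)
    have h1 : (c * lam ^ k) ^ ((1:ℝ)/k) ≤
        (⨅ w : Fin k → Fin m, ‖prodCLM A k w‖) ^ ((1:ℝ)/k) :=
      Real.rpow_le_rpow (by positivity) hinf (by positivity)
    have h2 : (c * lam ^ k) ^ ((1:ℝ)/k) = c ^ ((1:ℝ)/k) * lam := by
      rw [Real.mul_rpow hc_pos.le (pow_nonneg hlam k), ← Real.rpow_natCast lam k,
        ← Real.rpow_mul hlam, mul_one_div, div_self (by exact_mod_cast hk),
        Real.rpow_one]
    rw [← h2]; exact h1
  have hclim : Tendsto (fun k : ℕ => c ^ ((1:ℝ)/k) * lam) atTop (𝓝 lam) := by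
    have h0 : Tendsto (fun k : ℕ => (1:ℝ)/k) atTop (𝓝 0) := tendsto_one_div_atTop_nhds_zero_nat
    have h1 : Tendsto (fun k : ℕ => c ^ ((1:ℝ)/k)) atTop (𝓝 1) := by
      have := (Real.continuousAt_const_rpow (a := c) (b := (0:ℝ)) hc_pos.ne').tendsto.comp h0
      simpa [Function.comp_def] using this
    have := h1.mul_const lam
    simpa using this
  refine le_of_tendsto_of_tendsto hclim hlsr ?_
  filter_upwards [eventually_ge_atTop 1] with k hk
  exact hub k (by omega)
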